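/- Let (H₊, H₀, H₋) be a quasi Gelfand triple with embeddings ι₊ : D₊ ⊆ H₊ → H₀ and ι₋ : D₋ ⊆ H₋ → H₀. Then the operator [ι₊ ι₋] : D₊ × D₋ ⊆ H₊ × H₋ → H₀, (f,g) ↦ f + g, is closed. -/

import Mathlib

open Filter Topology
open scoped ComplexInnerProductSpace

noncomputable section

/-- A quasi Gelfand triple `(H₊, H₀, H₋)`, encoded by the two embeddings
`ι₊ : D₊ ⊆ H₊ → H₀` and `ι₋ : D₋ ⊆ H₋ → H₀`: both are injective, closed, densely defined
with dense ranges, and the `H₋`-norm of an element of `D₋` equals the `H₊`-norm of its image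
under the adjoint `ι₊*` (which exactly says that `H₋` completes `D₋` under
`‖g‖₋ = sup_{f ∈ D₊} |⟨g, f⟩₀|/‖f‖₊`); moreover `ran ι₋` is all of `dom ι₊*`. -/
structure QuasiGelfandTriple (Hp H₀ Hm : Type*)
    [NormedAddCommGroup Hp] [InnerProductSpace ℂ Hp] [CompleteSpace Hp]
    [NormedAddCommGroup H₀] [InnerProductSpace ℂ H₀] [CompleteSpace H₀]
    [NormedAddCommGroup Hm] [InnerProductSpace ℂ Hm] [CompleteSpace Hm] where
  ip : Hp →ₗ.[ℂ] H₀
  im : Hm →ₗ.[ℂ] H₀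
  ip_dense_dom : Dense (ip.domain : Set Hp)
  im_dense_dom : Dense (im.domain : Set Hm)
  ip_closed : IsClosed {p : Hp × H₀ | ∃ f : ip.domain, (f : Hp) = p.1 ∧ ip f = p.2}
  im_closed : IsClosed {p : Hm × H₀ | ∃ g : im.domain, (g : Hm) = p.1 ∧ im g = p.2}
  ip_injective : ∀ f : ip.domain, ip f = 0 → (f : Hp) = 0
  im_injective : ∀ g : im.domain, im g = 0 → (g : Hm) = 0
  ip_dense_ran : Dense (Set.range fun f : ip.domain => ip f)
  im_dense_ran : Dense (Set.range fun g : im.domain => im g)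
  riesz : ∀ g : im.domain, ∃ v : Hp,
    (∀ f : ip.domain, ⟪im g, ip f⟫ = ⟪v, (f : Hp)⟫) ∧ ‖v‖ = ‖(g : Hm)‖
  ran_im : ∀ (u : H₀) (v : Hp),
    (∀ f : ip.domain, ⟪u, ip f⟫ = ⟪v, (f : Hp)⟫) → ∃ g : im.domain, im g = u

/-- In a quasi Gelfand triple `(H₊, H₀, H₋)` the operator
`[ι₊ ι₋] : D₊ × D₋ ⊆ H₊ × H₋ → H₀, (f,g) ↦ ι₊f + ι₋g` is closed. -/
theorem pairing_bound {Hp H₀ Hm : Type*}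
    [NormedAddCommGroup Hp] [InnerProductSpace ℂ Hp] [CompleteSpace Hp]
    [NormedAddCommGroup H₀] [InnerProductSpace ℂ H₀] [CompleteSpace H₀]
    [NormedAddCommGroup Hm] [InnerProductSpace ℂ Hm] [CompleteSpace Hm]
    (Q : QuasiGelfandTriple Hp H₀ Hm) (g : Q.im.domain) (f : Q.ip.domain) :
    ‖(⟪Q.im g, Q.ip f⟫ : ℂ)‖ ≤ ‖(g : Hm)‖ * ‖(f : Hp)‖ := by
  obtain ⟨v, hv, hnv⟩ := Q.riesz g
  rw [hv f, ← hnv]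
  exact norm_inner_le_norm v (f : Hp)

theorem stmt11 {Hp H₀ Hm : Type*}
    [NormedAddCommGroup Hp] [InnerProductSpace ℂ Hp] [CompleteSpace Hp]
    [NormedAddCommGroup H₀] [InnerProductSpace ℂ H₀] [CompleteSpace H₀]
    [NormedAddCommGroup Hm] [InnerProductSpace ℂ Hm] [CompleteSpace Hm]
    (Q : QuasiGelfandTriple Hp H₀ Hm) :
    IsClosed {p : (Hp × Hm) × H₀ | ∃ (f : Q.ip.domain) (g : Q.im.domain),
      (f : Hp) = p.1.1 ∧ (g : Hm) = p.1.2 ∧ Q.ip f + Q.im g = p.2} := by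
  rw [← isSeqClosed_iff_isClosed]
  intro x p hx hxp
  choose f g hf hg hs using hx
  -- convergence of the component sequences
  have hfc : Tendsto (fun n => ((f n : Hp))) atTop (𝓝 p.1.1) := by
    have : Tendsto (fun n => (x n).1.1) atTop (𝓝 p.1.1) :=
      ((continuous_fst.comp continuous_fst).continuousAt.tendsto).comp hxp
    simpa only [hf] using this
  have hgc : Tendsto (fun n => ((g n : Hm))) atTop (𝓝 p.1.2) := by
    have : Tendsto (fun n => (x n).1.2) atTop (𝓝 p.1.2) :=
      ((continuous_snd.comp continuous_fst).continuousAt.tendsto).comp hxp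
    simpa only [hg] using this
  have hsc : Tendsto (fun n => Q.ip (f n) + Q.im (g n)) atTop (𝓝 p.2) := by
    have : Tendsto (fun n => (x n).2) atTop (𝓝 p.2) :=
      (continuous_snd.continuousAt.tendsto).comp hxp
    simpa only [hs] using this
  -- the dist of pairs of far-out terms goes to 0
  have hfd : Tendsto (fun q : ℕ × ℕ => dist ((f q.1 : Hp)) ((f q.2 : Hp))) atTop (𝓝 0) :=
    cauchySeq_iff_tendsto_dist_atTop_0.mp hfc.cauchySeq
  have hgd : Tendsto (fun q : ℕ × ℕ => dist ((g q.1 : Hm)) ((g q.2 : Hm))) atTop (𝓝 0) :=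
    cauchySeq_iff_tendsto_dist_atTop_0.mp hgc.cauchySeq
  have hsd : Tendsto (fun q : ℕ × ℕ =>
      dist (Q.ip (f q.1) + Q.im (g q.1)) (Q.ip (f q.2) + Q.im (g q.2))) atTop (𝓝 0) :=
    cauchySeq_iff_tendsto_dist_atTop_0.mp hsc.cauchySeq
  -- the key estimate
  have key : ∀ n m : ℕ,
      dist (Q.ip (f n)) (Q.ip (f m)) ^ 2 ≤
        dist (Q.ip (f n) + Q.im (g n)) (Q.ip (f m) + Q.im (g m)) ^ 2 +
          2 * (dist ((g n : Hm)) ((g m : Hm)) * dist ((f n : Hp)) ((f m : Hp))) := by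
    intro n m
    set a : H₀ := Q.ip (f n) - Q.ip (f m) with ha
    set b : H₀ := Q.im (g n) - Q.im (g m) with hb
    have hab : ‖a + b‖ ^ 2 = ‖a‖ ^ 2 + 2 * Complex.re ⟪a, b⟫ + ‖b‖ ^ 2 :=
      @norm_add_sq ℂ _ _ _ _ a b
    have hpair : ‖(⟪b, a⟫ : ℂ)‖ ≤ ‖((g n : Hm)) - ((g m : Hm))‖ * ‖((f n : Hp)) - ((f m : Hp))‖ := by
      have h1 : b = Q.im (g n - g m) := hb.trans (Q.im.map_sub _ _).symm
      have h2 : a = Q.ip (f n - f m) := ha.trans (Q.ip.map_sub _ _).symm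
      have := pairing_bound Q (g n - g m) (f n - f m)
      rw [h1, h2]
      simpa using this
    have hre : -(2 * Complex.re ⟪a, b⟫) ≤
        2 * (‖((g n : Hm)) - ((g m : Hm))‖ * ‖((f n : Hp)) - ((f m : Hp))‖) := by
      have h3 : Complex.re (⟪a, b⟫ : ℂ) = Complex.re (⟪b, a⟫ : ℂ) := by simpa using inner_re_symm (𝕜 := ℂ) a b
      have h4 : |Complex.re (⟪b, a⟫ : ℂ)| ≤ ‖(⟪b, a⟫ : ℂ)‖ := Complex.abs_re_le_norm _
      nlinarith [abs_nonneg (Complex.re (⟪b, a⟫ : ℂ)), neg_abs_le (Complex.re (⟪b, a⟫ : ℂ))]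
    have hdista : dist (Q.ip (f n)) (Q.ip (f m)) = ‖a‖ := by rw [dist_eq_norm]
    have hdists : dist (Q.ip (f n) + Q.im (g n)) (Q.ip (f m) + Q.im (g m)) = ‖a + b‖ := by
      rw [dist_eq_norm]; congr 1; rw [ha, hb]; abel
    have hdistg : dist ((g n : Hm)) ((g m : Hm)) = ‖((g n : Hm)) - ((g m : Hm))‖ := dist_eq_norm _ _
    have hdistf : dist ((f n : Hp)) ((f m : Hp)) = ‖((f n : Hp)) - ((f m : Hp))‖ := dist_eq_norm _ _
    rw [hdista, hdists, hdistg, hdistf]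
    nlinarith [sq_nonneg ‖b‖]
  -- ι₊ fₙ is Cauchy
  have hipc : CauchySeq (fun n => Q.ip (f n)) := by
    rw [cauchySeq_iff_tendsto_dist_atTop_0]
    have hE : Tendsto (fun q : ℕ × ℕ =>
        dist (Q.ip (f q.1) + Q.im (g q.1)) (Q.ip (f q.2) + Q.im (g q.2)) ^ 2 +
          2 * (dist ((g q.1 : Hm)) ((g q.2 : Hm)) * dist ((f q.1 : Hp)) ((f q.2 : Hp))))
        atTop (𝓝 0) := by
      have := ((hsd.mul hsd).add (((hgd.mul hfd)).const_mul 2))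
      simpa [pow_two] using this
    have hsqrt : Tendsto (fun q : ℕ × ℕ => Real.sqrt
        (dist (Q.ip (f q.1) + Q.im (g q.1)) (Q.ip (f q.2) + Q.im (g q.2)) ^ 2 +
          2 * (dist ((g q.1 : Hm)) ((g q.2 : Hm)) * dist ((f q.1 : Hp)) ((f q.2 : Hp)))))
        atTop (𝓝 0) := by
      have := (Real.continuous_sqrt.continuousAt (x := (0:ℝ))).tendsto.comp hE
      simpa [Function.comp_def] using this
    refine squeeze_zero (fun q => dist_nonneg) (fun q => ?_) hsqrt
    exact Real.le_sqrt_of_sq_le (key q.1 q.2)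
  obtain ⟨a, ha⟩ := cauchySeq_tendsto_of_complete hipc
  have hb : Tendsto (fun n => Q.im (g n)) atTop (𝓝 (p.2 - a)) := by
    have : Tendsto (fun n => (Q.ip (f n) + Q.im (g n)) - Q.ip (f n)) atTop (𝓝 (p.2 - a)) :=
      hsc.sub ha
    simpa using this
  -- use closedness of the two embeddings
  have hFmem : (p.1.1, a) ∈ {q : Hp × H₀ | ∃ f : Q.ip.domain, (f : Hp) = q.1 ∧ Q.ip f = q.2} := by
    refine Q.ip_closed.mem_of_tendsto (hfc.prodMk_nhds ha) ?_
    exact Eventually.of_forall fun n => ⟨f n, rfl, rfl⟩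
  have hGmem : (p.1.2, p.2 - a) ∈
      {q : Hm × H₀ | ∃ g : Q.im.domain, (g : Hm) = q.1 ∧ Q.im g = q.2} := by
    refine Q.im_closed.mem_of_tendsto (hgc.prodMk_nhds hb) ?_
    exact Eventually.of_forall fun n => ⟨g n, rfl, rfl⟩
  obtain ⟨F, hF1, hF2⟩ := hFmem
  obtain ⟨G, hG1, hG2⟩ := hGmem
  exact ⟨F, G, hF1, hG1, by rw [hF2, hG2]; simp⟩
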